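/- With the operators 𝒞_l defined recursively as above (𝒞_l = 0 for l < m−1, 𝒞_{m−1} = id, 𝒞_l = −∑_{k=0}^{m−1} Q_k(D_x) 𝒞_{k+l−m} for l ≥ m), one has the explicit formula for every l ∈ ℕ and φ ∈ C^∞(ℝ^d): 𝒞_{m−1+l}(φ) = ∑_{β ∈ ℕ^m, σ(β)=l} (−1)^{|β|} (|β| choose β₁,…,β_m) ∏_{k=1}^m Q_{m−k}(D_x)^{β_k} φ, where σ(β) = ∑_{j=1}^m j β_j. -/

import Mathlib

open Finset Nat

lemma mult_rec (m : ℕ) (f : Fin m → ℕ) (hf : 0 < ∑ j, f j) :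
    Nat.multinomial Finset.univ f =
      ∑ j : Fin m, if 1 ≤ f j then
        Nat.multinomial Finset.univ (Function.update f j (f j - 1)) else 0 := by
  have hP : 0 < ∏ j, (f j)! := Finset.prod_pos fun j _ => Nat.factorial_pos _
  apply Nat.eq_of_mul_eq_mul_left hP
  rw [Nat.multinomial_spec, Finset.mul_sum]
  have key : ∀ j : Fin m, (∏ i, (f i)!) * (if 1 ≤ f j then
      Nat.multinomial Finset.univ (Function.update f j (f j - 1)) else 0)
      = f j * (∑ i, f i - 1)! := by
    intro j
    by_cases h : 1 ≤ f j
    · rw [if_pos h]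
      have hsum : ∑ i, Function.update f j (f j - 1) i = ∑ i, f i - 1 := by
        rw [Finset.sum_update_of_mem (mem_univ j), ← Finset.erase_eq]
        have := Finset.add_sum_erase univ f (mem_univ j)
        omega
      have e1 : ∏ i ∈ univ.erase j, ((Function.update f j (f j - 1)) i)!
          = ∏ i ∈ univ.erase j, (f i)! :=
        Finset.prod_congr rfl fun i hi => by
          rw [Function.update_of_ne (Finset.mem_erase.1 hi).1]
      have hprod : (∏ i, (f i)!) = f j * ∏ i, ((Function.update f j (f j - 1)) i)! := by
        rw [← Finset.mul_prod_erase univ (fun i => (f i)!) (mem_univ j),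
          ← Finset.mul_prod_erase univ
            (fun i => ((Function.update f j (f j - 1)) i)!) (mem_univ j),
          e1, Function.update_self, ← mul_assoc, Nat.mul_factorial_pred (Nat.one_le_iff_ne_zero.mp h)]
      rw [hprod, mul_assoc, Nat.multinomial_spec, hsum]
    · rw [if_neg h, mul_zero]
      have : f j = 0 := by omega
      simp [this]
  rw [Finset.sum_congr rfl (fun j _ => key j), ← Finset.sum_mul, Nat.mul_factorial_pred hf.ne']

def Tset (m l : ℕ) : Finset (Fin m → ℕ) :=
  (Fintype.piFinset fun _ : Fin m => Finset.range (l + 1)).filter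
    (fun β => ∑ j : Fin m, ((j : ℕ) + 1) * β j = l)

lemma le_of_mem_Tset {m l : ℕ} {β : Fin m → ℕ}
    (h : ∑ j : Fin m, ((j : ℕ) + 1) * β j = l) (j : Fin m) : β j ≤ l := by
  have h1 : β j ≤ ((j : ℕ) + 1) * β j := Nat.le_mul_of_pos_left _ (by omega)
  have h2 : ((j : ℕ) + 1) * β j ≤ l := h ▸
    Finset.single_le_sum (f := fun j : Fin m => ((j : ℕ) + 1) * β j)
      (fun _ _ => Nat.zero_le _) (Finset.mem_univ j)
  omega

lemma mem_Tset {m l : ℕ} {β : Fin m → ℕ} :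
    β ∈ Tset m l ↔ ∑ j : Fin m, ((j : ℕ) + 1) * β j = l := by
  simp only [Tset, Finset.mem_filter, Fintype.mem_piFinset, Finset.mem_range]
  refine ⟨fun h => h.2, fun h => ⟨fun j => ?_, h⟩⟩
  have := le_of_mem_Tset h j
  omega

def Fsum (A : Type*) [CommRing A] (m : ℕ) (Q : ℕ → A) (l : ℕ) : A :=
  ∑ β ∈ Tset m l,
    (-1 : A) ^ (∑ j : Fin m, β j) * (Nat.multinomial Finset.univ β : A) *
      ∏ j : Fin m, Q (m - ((j : ℕ) + 1)) ^ β j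

lemma Fsum_zero (A : Type*) [CommRing A] (m : ℕ) (Q : ℕ → A) : Fsum A m Q 0 = 1 := by
  have hT : Tset m 0 = {fun _ => 0} := by
    ext β
    rw [mem_Tset, Finset.mem_singleton]
    constructor
    · intro h
      funext j
      have := le_of_mem_Tset h j
      omega
    · intro h; subst h; simp
  rw [Fsum, hT, Finset.sum_singleton]
  simp [Nat.multinomial]

lemma Fsum_eq (A : Type*) [CommRing A] (m : ℕ) (Q : ℕ → A) (l : ℕ) :
    (∑ β ∈ Finset.univ.filter
        (fun β : Fin m → Fin (l + 1) => ∑ j : Fin m, ((j : ℕ) + 1) * (β j : ℕ) = l),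
      (-1 : A) ^ (∑ j : Fin m, (β j : ℕ)) *
        (Nat.multinomial Finset.univ (fun j : Fin m => (β j : ℕ)) : A) *
        ∏ j : Fin m, Q (m - ((j : ℕ) + 1)) ^ (β j : ℕ)) = Fsum A m Q l := by
  refine Finset.sum_nbij' (fun β j => (β j : ℕ))
    (fun γ j => (⟨min (γ j) l, by omega⟩ : Fin (l + 1))) ?_ ?_ ?_ ?_ ?_
  · intro β hβ
    rw [mem_Tset]
    exact (Finset.mem_filter.1 hβ).2
  · intro γ hγ
    rw [mem_Tset] at hγ
    rw [Finset.mem_filter]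
    refine ⟨Finset.mem_univ _, ?_⟩
    have : ∀ j, min (γ j) l = γ j := fun j => min_eq_left (le_of_mem_Tset hγ j)
    simp only [this]
    exact hγ
  · intro β hβ
    have h := (Finset.mem_filter.1 hβ).2
    funext j
    have : min (β j : ℕ) l = (β j : ℕ) := min_eq_left (le_of_mem_Tset h j)
    exact Fin.ext this
  · intro γ hγ
    rw [mem_Tset] at hγ
    funext j
    exact min_eq_left (le_of_mem_Tset hγ j)
  · intro β _; rfl

lemma sum_mul_update (m : ℕ) (w β : Fin m → ℕ) (j : Fin m) (c : ℕ) :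
    ∑ i, w i * (Function.update β j c) i = w j * c + ∑ i ∈ univ.erase j, w i * β i := by
  rw [← Finset.add_sum_erase univ (fun i => w i * (Function.update β j c) i) (mem_univ j),
    Function.update_self]
  congr 1
  exact Finset.sum_congr rfl fun i hi => by rw [Function.update_of_ne (mem_erase.1 hi).1]

lemma sum_mul_split (m : ℕ) (w β : Fin m → ℕ) (j : Fin m) :
    ∑ i, w i * β i = w j * β j + ∑ i ∈ univ.erase j, w i * β i :=
  (Finset.add_sum_erase univ (fun i => w i * β i) (mem_univ j)).symm

lemma Fsum_rec (A : Type*) [CommRing A] (m : ℕ) (hm : 1 ≤ m) (Q : ℕ → A) (l : ℕ) :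
    Fsum A m Q (l + 1) =
      -∑ k ∈ Finset.range m, Q k *
        (if m - 1 ≤ k + l then Fsum A m Q (k + l - (m - 1)) else 0) := by
  have step1 : Fsum A m Q (l + 1) = ∑ β ∈ Tset m (l + 1), ∑ j : Fin m,
      (if 1 ≤ β j then
        (-1 : A) ^ (∑ i : Fin m, β i) *
          (Nat.multinomial Finset.univ (Function.update β j (β j - 1)) : A) *
          ∏ i : Fin m, Q (m - ((i : ℕ) + 1)) ^ β i
      else 0) := by
    refine Finset.sum_congr rfl fun β hβ => ?_
    rw [mem_Tset] at hβ
    have hpos : 0 < ∑ j, β j := by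
      by_contra h
      have hz : ∀ j ∈ (univ : Finset (Fin m)), β j = 0 :=
        Finset.sum_eq_zero_iff.1 (by omega)
      have : ∑ j : Fin m, ((j : ℕ) + 1) * β j = 0 :=
        Finset.sum_eq_zero fun j _ => by rw [hz j (mem_univ j), mul_zero]
      omega
    rw [mult_rec m β hpos]
    simp only [Nat.cast_sum, Nat.cast_ite, Nat.cast_zero, Finset.mul_sum, Finset.sum_mul,
      mul_ite, ite_mul, mul_zero, zero_mul]
  rw [step1, Finset.sum_comm]
  have step3 : ∀ j : Fin m,
      (∑ β ∈ Tset m (l + 1), if 1 ≤ β j then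
        (-1 : A) ^ (∑ i : Fin m, β i) *
          (Nat.multinomial Finset.univ (Function.update β j (β j - 1)) : A) *
          ∏ i : Fin m, Q (m - ((i : ℕ) + 1)) ^ β i
      else 0)
      = if (j : ℕ) ≤ l then
          -(Q (m - ((j : ℕ) + 1)) * Fsum A m Q (l - (j : ℕ))) else 0 := by
    intro j
    rw [← Finset.sum_filter]
    by_cases hj : (j : ℕ) ≤ l
    · rw [if_pos hj, Fsum, Finset.mul_sum, ← Finset.sum_neg_distrib]
      refine Finset.sum_nbij' (fun β => Function.update β j (β j - 1))
        (fun γ => Function.update γ j (γ j + 1)) ?_ ?_ ?_ ?_ ?_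
      · intro β hβ
        obtain ⟨hβT, hβj⟩ := Finset.mem_filter.1 hβ
        rw [mem_Tset] at hβT
        rw [mem_Tset]
        have key : (∑ i : Fin m, ((i : ℕ) + 1) * Function.update β j (β j - 1) i)
            + ((j : ℕ) + 1) = ∑ i : Fin m, ((i : ℕ) + 1) * β i := by
          rw [sum_mul_update m (fun i => (i : ℕ) + 1) β j (β j - 1),
            sum_mul_split m (fun i => (i : ℕ) + 1) β j, add_right_comm]
          congr 1
          have hb : β j = (β j - 1) + 1 := by omega
          conv_rhs => rw [hb]
          ring
        omega
      · intro γ hγ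
        rw [mem_Tset] at hγ
        rw [Finset.mem_filter, mem_Tset]
        constructor
        · have key : ∑ i : Fin m, ((i : ℕ) + 1) * Function.update γ j (γ j + 1) i
              = (∑ i : Fin m, ((i : ℕ) + 1) * γ i) + ((j : ℕ) + 1) := by
            rw [sum_mul_update m (fun i => (i : ℕ) + 1) γ j (γ j + 1),
              sum_mul_split m (fun i => (i : ℕ) + 1) γ j, add_right_comm]
            ring
          omega
        · rw [Function.update_self]; omega
      · intro β hβ
        obtain ⟨_, hβj⟩ := Finset.mem_filter.1 hβ
        funext i
        rcases eq_or_ne i j with rfl | hij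
        · rw [Function.update_self, Function.update_self]; omega
        · rw [Function.update_of_ne hij, Function.update_of_ne hij]
      · intro γ _
        funext i
        rcases eq_or_ne i j with rfl | hij
        · rw [Function.update_self, Function.update_self]; omega
        · rw [Function.update_of_ne hij, Function.update_of_ne hij]
      · intro β hβ
        obtain ⟨hβT, hβj⟩ := Finset.mem_filter.1 hβ
        set γ := Function.update β j (β j - 1) with hγdef
        have hsum : ∑ i : Fin m, β i = (∑ i : Fin m, γ i) + 1 := by
          have h1 : ∑ i : Fin m, γ i = 1 * (β j - 1) + ∑ i ∈ univ.erase j, 1 * β i := by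
            simpa using sum_mul_update m (fun _ => 1) β j (β j - 1)
          have h2 : ∑ i : Fin m, β i = 1 * β j + ∑ i ∈ univ.erase j, 1 * β i := by
            simpa using sum_mul_split m (fun _ => 1) β j
          omega
        have hprod : ∏ i : Fin m, Q (m - ((i : ℕ) + 1)) ^ β i
            = Q (m - ((j : ℕ) + 1)) * ∏ i : Fin m, Q (m - ((i : ℕ) + 1)) ^ γ i := by
          rw [← Finset.mul_prod_erase univ (fun i : Fin m => Q (m - ((i : ℕ) + 1)) ^ β i) (mem_univ j),
            ← Finset.mul_prod_erase univ (fun i : Fin m => Q (m - ((i : ℕ) + 1)) ^ γ i) (mem_univ j)]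
          have he : ∏ i ∈ univ.erase j, Q (m - ((i : ℕ) + 1)) ^ γ i
              = ∏ i ∈ univ.erase j, Q (m - ((i : ℕ) + 1)) ^ β i :=
            Finset.prod_congr rfl fun i hi => by
              rw [hγdef, Function.update_of_ne (mem_erase.1 hi).1]
          have hb : β j = (β j - 1) + 1 := by omega
          rw [he, hγdef, Function.update_self]
          conv_lhs => rw [hb]
          rw [pow_succ]
          ring
        rw [hsum, hprod, pow_succ]
        ring
    · rw [if_neg hj]
      have hempty : (Tset m (l + 1)).filter (fun β => 1 ≤ β j) = ∅ := by
        refine Finset.eq_empty_of_forall_notMem fun β hβ => ?_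
        obtain ⟨hβT, hβj⟩ := Finset.mem_filter.1 hβ
        rw [mem_Tset] at hβT
        have h1 : ((j : ℕ) + 1) * β j ≤ l + 1 := hβT ▸
          Finset.single_le_sum (f := fun i : Fin m => ((i : ℕ) + 1) * β i)
            (fun _ _ => Nat.zero_le _) (Finset.mem_univ j)
        have h2 : (j : ℕ) + 1 ≤ ((j : ℕ) + 1) * β j := Nat.le_mul_of_pos_right _ (by omega)
        omega
      rw [hempty, Finset.sum_empty]
  rw [Finset.sum_congr rfl fun j _ => step3 j, ← Finset.sum_neg_distrib]
  refine Finset.sum_nbij' (fun j : Fin m => m - 1 - (j : ℕ))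
    (fun k => (⟨m - 1 - k, by omega⟩ : Fin m)) ?_ ?_ ?_ ?_ ?_
  · intro j _
    have := j.isLt
    rw [Finset.mem_range]
    omega
  · intro k _
    exact Finset.mem_univ _
  · intro j _
    have := j.isLt
    apply Fin.ext
    show m - 1 - (m - 1 - (j : ℕ)) = (j : ℕ)
    omega
  · intro k hk
    rw [Finset.mem_range] at hk
    show m - 1 - (m - 1 - k) = k
    omega
  · intro j _
    have hjm := j.isLt
    by_cases hc : (j : ℕ) ≤ l
    · rw [if_pos hc, if_pos (by omega)]
      rw [show m - 1 - (j : ℕ) + l - (m - 1) = l - (j : ℕ) from by omega,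
        show m - ((j : ℕ) + 1) = m - 1 - (j : ℕ) from by omega]
    · rw [if_neg hc, if_neg (by omega), mul_zero, neg_zero]

/-- Explicit formula for the recursively defined operators `𝒞_l` (Proposition
4.5 of Kalmes): `𝒞_l = 0` for `l < m−1`, `𝒞_{m−1} = 1`,
`𝒞_l = −∑_{k=0}^{m−1} Q_k 𝒞_{k+l−m}` for `l ≥ m`; then
`𝒞_{m−1+l} = ∑_{σ(β)=l} (−1)^{|β|} (|β| choose β) ∏_{k=1}^m Q_{m−k}^{β_k}`,
where `σ(β) = ∑_{j=1}^m j β_j`.  The commuting constant-coefficient operators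
`Q_0,…,Q_m` (with `Q_m = 1`) are modelled as elements of a commutative ring. -/
theorem explicit_formula_C (A : Type*) [CommRing A] (m : ℕ) (hm : 1 ≤ m)
    (Q : ℕ → A) (hQm : Q m = 1)
    (C : ℕ → A)
    (hC0 : ∀ l, l < m - 1 → C l = 0)
    (hC1 : C (m - 1) = 1)
    (hCrec : ∀ l : ℕ, C (m + l) = -∑ k ∈ Finset.range m, Q k * C (k + l)) :
    ∀ l : ℕ,
      C (m - 1 + l) =
        ∑ β ∈ Finset.univ.filter
            (fun β : Fin m → Fin (l + 1) => ∑ j : Fin m, ((j : ℕ) + 1) * (β j : ℕ) = l),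
          (-1 : A) ^ (∑ j : Fin m, (β j : ℕ)) *
            (Nat.multinomial Finset.univ (fun j : Fin m => (β j : ℕ)) : A) *
            ∏ j : Fin m, Q (m - ((j : ℕ) + 1)) ^ (β j : ℕ) := by
  have main : ∀ l, C (m - 1 + l) = Fsum A m Q l := by
    intro l
    induction l using Nat.strong_induction_on with
    | _ l ih =>
      match l with
      | 0 => simpa [Fsum_zero A m Q] using hC1
      | Nat.succ l' =>
        have h1 : m - 1 + (l' + 1) = m + l' := by omega
        rw [h1, hCrec l', Fsum_rec A m hm Q l']
        congr 1
        refine Finset.sum_congr rfl fun k hk => ?_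
        rw [Finset.mem_range] at hk
        by_cases h : m - 1 ≤ k + l'
        · rw [if_pos h]
          have h2 : k + l' = m - 1 + (k + l' - (m - 1)) := by omega
          conv_lhs => rw [h2]
          rw [ih _ (by omega)]
        · rw [if_neg h, hC0 _ (by omega)]
  intro l
  rw [main l, ← Fsum_eq A m Q l]
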